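/- Every sign-changing weak solution u ∈ D^{1,2}(ℝⁿ₊) of the half-space Yamabe equation satisfies I(u) ≥ (1/(n-1)) S_n^{n-1}, where I(u) = (1/2)∫_{ℝⁿ₊}|∇u|² − (1/2*)∫_{∂ℝⁿ₊}|u|^{2*}; in fact I(u⁺) ≥ (1/(2(n-1))) S_n^{n-1} and I(u⁻) ≥ (1/(2(n-1))) S_n^{n-1}. -/

import Mathlib

open MeasureTheory Real

/-- The pointwise dot product of the gradients of `u` and `v` on the half-space
`ℝⁿ₊ = ℝ^{n-1} × [0,∞)`, computed as the sum of products of partial derivatives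
along the standard coordinate directions. -/
noncomputable def gradDot (n : ℕ) (u v : EuclideanSpace ℝ (Fin (n-1)) × ℝ → ℝ)
    (p : EuclideanSpace ℝ (Fin (n-1)) × ℝ) : ℝ :=
  (∑ i : Fin (n-1), fderiv ℝ u p (EuclideanSpace.single i 1, (0:ℝ))
      * fderiv ℝ v p (EuclideanSpace.single i 1, (0:ℝ)))
  + fderiv ℝ u p ((0 : EuclideanSpace ℝ (Fin (n-1))), (1:ℝ))
      * fderiv ℝ v p ((0 : EuclideanSpace ℝ (Fin (n-1))), (1:ℝ))

/-- `|∇u|²`. -/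
noncomputable def gradSq (n : ℕ) (u : EuclideanSpace ℝ (Fin (n-1)) × ℝ → ℝ)
    (p : EuclideanSpace ℝ (Fin (n-1)) × ℝ) : ℝ := gradDot n u u p

/-- The (open) upper half-space `{t > 0}` inside `ℝ^{n-1} × ℝ`. -/
def upper (n : ℕ) : Set (EuclideanSpace ℝ (Fin (n-1)) × ℝ) := {p | 0 < p.2}

/-- The squared `D^{1,2}`-norm `‖u‖²_D = ∫_{ℝⁿ₊} |∇u|²`. -/
noncomputable def Dsq (n : ℕ) (u : EuclideanSpace ℝ (Fin (n-1)) × ℝ → ℝ) : ℝ :=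
  ∫ p in upper n, gradSq n u p

/-- The critical trace exponent `2* = 2(n-1)/(n-2)`. -/
noncomputable def twoStar (n : ℕ) : ℝ := 2 * ((n : ℝ) - 1) / ((n : ℝ) - 2)

/-- The boundary integral `∫_{∂ℝⁿ₊} |u|^{2*}`. -/
noncomputable def bdryInt (n : ℕ) (u : EuclideanSpace ℝ (Fin (n-1)) × ℝ → ℝ) : ℝ :=
  ∫ x : EuclideanSpace ℝ (Fin (n-1)), |u (x, 0)| ^ twoStar n

/-- The energy functional `I(u) = (1/2)∫_{ℝⁿ₊}|∇u|² − (1/2*)∫_{∂ℝⁿ₊}|u|^{2*}`. -/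
noncomputable def energy (n : ℕ) (u : EuclideanSpace ℝ (Fin (n-1)) × ℝ → ℝ) : ℝ :=
  (1/2) * Dsq n u - (1 / twoStar n) * bdryInt n u

section Aux

variable {E : Type*} [NormedAddCommGroup E] [NormedSpace ℝ E]

lemma fderiv_zero_of_nonneg_zero {v : E → ℝ} {p : E} (h0 : ∀ q, 0 ≤ v q)
    (hp : v p = 0) : fderiv ℝ v p = 0 := by
  have : IsLocalMin v p := Filter.Eventually.of_forall fun q => hp ▸ h0 q
  by_cases hd : DifferentiableAt ℝ v p
  · exact this.fderiv_eq_zero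
  · exact fderiv_zero_of_not_differentiableAt hd

lemma fderiv_trichotomy (u : E → ℝ) (p : E) :
    (fderiv ℝ u p = fderiv ℝ (fun q => max (u q) 0) p
        ∧ fderiv ℝ (fun q => max (-u q) 0) p = 0)
    ∨ (fderiv ℝ u p = -fderiv ℝ (fun q => max (-u q) 0) p
        ∧ fderiv ℝ (fun q => max (u q) 0) p = 0)
    ∨ (fderiv ℝ (fun q => max (u q) 0) p = 0
        ∧ fderiv ℝ (fun q => max (-u q) 0) p = 0) := by
  set P : E → ℝ := fun q => max (u q) 0 with hP
  set M : E → ℝ := fun q => max (-u q) 0 with hM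
  have hPn : ∀ q, 0 ≤ P q := fun q => le_max_right _ _
  have hMn : ∀ q, 0 ≤ M q := fun q => le_max_right _ _
  rcases lt_trichotomy (u p) 0 with hlt | heq | hgt
  · -- u p < 0
    by_cases hd : DifferentiableAt ℝ M p
    · right; left
      have hMp : 0 < M p := by simp [hM]; linarith
      have hev : ∀ᶠ q in nhds p, M q ∈ Set.Ioi (0:ℝ) :=
        hd.continuousAt (isOpen_Ioi.mem_nhds hMp)
      constructor
      · have hequ : u =ᶠ[nhds p] fun q => -(M q) := by
          filter_upwards [hev] with q hq
          have : 0 < -u q := by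
            by_contra h
            simp only [hM, Set.mem_Ioi] at hq
            rw [max_eq_right (by linarith)] at hq; exact absurd hq (lt_irrefl 0)
          simp [hM, max_eq_left this.le]
        rw [hequ.fderiv_eq, fderiv_fun_neg]
      · have heqP : P =ᶠ[nhds p] fun _ => (0:ℝ) := by
          filter_upwards [hev] with q hq
          have : 0 < -u q := by
            by_contra h
            simp only [hM, Set.mem_Ioi] at hq
            rw [max_eq_right (by linarith)] at hq; exact absurd hq (lt_irrefl 0)
          simp [hP, max_eq_right (by linarith : u q ≤ 0)]
        rw [heqP.fderiv_eq]; simp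
    · right; right
      refine ⟨fderiv_zero_of_nonneg_zero hPn ?_, fderiv_zero_of_not_differentiableAt hd⟩
      simp [hP, max_eq_right hlt.le]
  · -- u p = 0
    right; right
    refine ⟨fderiv_zero_of_nonneg_zero hPn ?_, fderiv_zero_of_nonneg_zero hMn ?_⟩
    · simp [hP, heq]
    · simp [hM, heq]
  · -- 0 < u p
    by_cases hd : DifferentiableAt ℝ P p
    · left
      have hPp : 0 < P p := lt_max_iff.mpr (Or.inl hgt)
      have hev : ∀ᶠ q in nhds p, P q ∈ Set.Ioi (0:ℝ) :=
        hd.continuousAt (isOpen_Ioi.mem_nhds hPp)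
      constructor
      · have hequ : u =ᶠ[nhds p] P := by
          filter_upwards [hev] with q hq
          have : 0 < u q := by
            by_contra h
            simp only [hP, Set.mem_Ioi] at hq
            rw [max_eq_right (by linarith)] at hq; exact absurd hq (lt_irrefl 0)
          simp [hP, max_eq_left this.le]
        exact hequ.fderiv_eq
      · have heqM : M =ᶠ[nhds p] fun _ => (0:ℝ) := by
          filter_upwards [hev] with q hq
          have : 0 < u q := by
            by_contra h
            simp only [hP, Set.mem_Ioi] at hq
            rw [max_eq_right (by linarith)] at hq; exact absurd hq (lt_irrefl 0)
          simp [hM, max_eq_right (by linarith : -u q ≤ 0)]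
        rw [heqM.fderiv_eq]; simp
    · right; right
      refine ⟨fderiv_zero_of_not_differentiableAt hd, fderiv_zero_of_nonneg_zero hMn ?_⟩
      simp [hM, max_eq_right (by linarith : -u p ≤ 0)]

end Aux

lemma gradDot_up (n : ℕ) (u : EuclideanSpace ℝ (Fin (n-1)) × ℝ → ℝ)
    (p : EuclideanSpace ℝ (Fin (n-1)) × ℝ) :
    gradDot n u (fun q => max (u q) 0) p = gradSq n (fun q => max (u q) 0) p := by
  rcases fderiv_trichotomy u p with ⟨h1, _⟩ | ⟨_, h2⟩ | ⟨h1, _⟩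
  · simp [gradDot, gradSq, h1]
  · simp [gradDot, gradSq, h2]
  · simp [gradDot, gradSq, h1]

lemma gradDot_um (n : ℕ) (u : EuclideanSpace ℝ (Fin (n-1)) × ℝ → ℝ)
    (p : EuclideanSpace ℝ (Fin (n-1)) × ℝ) :
    gradDot n u (fun q => max (-u q) 0) p = -gradSq n (fun q => max (-u q) 0) p := by
  rcases fderiv_trichotomy u p with ⟨_, h2⟩ | ⟨h1, _⟩ | ⟨_, h2⟩
  · simp [gradDot, gradSq, h2]
  · simp only [gradDot, gradSq, h1, ContinuousLinearMap.neg_apply, neg_mul]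
    rw [Finset.sum_neg_distrib]; ring
  · simp [gradDot, gradSq, h2]

lemma rpow_helper {t e : ℝ} (he : 0 < e) (ht : t = e + 2) {c : ℝ} (hc : 0 ≤ c) :
    c ^ e * c * c = c ^ t := by
  rcases eq_or_lt_of_le hc with h | h
  · rw [← h, ht, Real.zero_rpow he.ne', Real.zero_rpow (by positivity)]; ring
  · rw [ht, Real.rpow_add h, Real.rpow_two]; ring

/-- Every sign-changing weak solution `u ∈ D^{1,2}(ℝⁿ₊)` of the half-space Yamabe
equation satisfies `I(u⁺) ≥ (1/(2(n-1))) S_n^{n-1}`, `I(u⁻) ≥ (1/(2(n-1))) S_n^{n-1}`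
and `I(u) ≥ (1/(n-1)) S_n^{n-1}`. -/
theorem sign_changing_energy_bound (n : ℕ) (hn : 3 ≤ n)
    (𝒟 : Set (EuclideanSpace ℝ (Fin (n-1)) × ℝ → ℝ))
    (u : EuclideanSpace ℝ (Fin (n-1)) × ℝ → ℝ)
    (hu : u ∈ 𝒟) (hup : (fun p => max (u p) 0) ∈ 𝒟)
    (hum : (fun p => max (-u p) 0) ∈ 𝒟)
    -- the sharp Sobolev trace constant
    (S : ℝ) (hS : 0 < S)
    (htrace : ∀ v ∈ 𝒟, S * (bdryInt n v) ^ (2 / twoStar n) ≤ Dsq n v)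
    -- weak solution of Δu = 0 in ℝⁿ₊, ∂u/∂ν + |u|^{2/(n-2)}u = 0 on ∂ℝⁿ₊
    (hweak : ∀ φ ∈ 𝒟, ∫ p in upper n, gradDot n u φ p
      = ∫ x : EuclideanSpace ℝ (Fin (n-1)),
          |u (x, 0)| ^ (2 / ((n : ℝ) - 2)) * u (x, 0) * φ (x, 0))
    -- u is sign-changing: neither u⁺ nor u⁻ is identically zero
    (hnep : Dsq n (fun p => max (u p) 0) ≠ 0)
    (hnem : Dsq n (fun p => max (-u p) 0) ≠ 0) :
    (1 / (2 * ((n : ℝ) - 1))) * S ^ (n - 1) ≤ energy n (fun p => max (u p) 0)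
      ∧ (1 / (2 * ((n : ℝ) - 1))) * S ^ (n - 1) ≤ energy n (fun p => max (-u p) 0)
      ∧ (1 / ((n : ℝ) - 1)) * S ^ (n - 1) ≤ energy n u := by
  have hn3 : (3:ℝ) ≤ (n:ℝ) := by exact_mod_cast hn
  have hn2 : (0:ℝ) < (n:ℝ) - 2 := by linarith
  have hn1 : (0:ℝ) < (n:ℝ) - 1 := by linarith
  have he : (0:ℝ) < 2 / ((n:ℝ) - 2) := by positivity
  have ht : twoStar n = 2 / ((n:ℝ) - 2) + 2 := by
    unfold twoStar; field_simp; ring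
  have ht0 : (0:ℝ) < twoStar n := by rw [ht]; linarith
  -- scalar identities
  have hscalP : ∀ a : ℝ, |a| ^ (2/((n:ℝ)-2)) * a * max a 0 = |max a 0| ^ twoStar n := by
    intro a
    rcases le_or_gt a 0 with h | h
    · rw [max_eq_right h]
      simp [Real.zero_rpow ht0.ne']
    · rw [max_eq_left h.le, abs_of_pos h]
      exact rpow_helper he ht h.le
  have hscalM : ∀ a : ℝ, |a| ^ (2/((n:ℝ)-2)) * a * max (-a) 0
      = -(|max (-a) 0| ^ twoStar n) := by
    intro a
    rcases le_or_gt 0 a with h | h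
    · rw [max_eq_right (by linarith : -a ≤ 0)]
      simp [Real.zero_rpow ht0.ne']
    · rw [max_eq_left (by linarith : 0 ≤ -a), abs_of_neg h, abs_of_pos (by linarith : 0 < -a)]
      have := rpow_helper he ht (by linarith : (0:ℝ) ≤ -a)
      nlinarith [this]
  have hscalU : ∀ a : ℝ, |a| ^ (2/((n:ℝ)-2)) * a * a = |a| ^ twoStar n := by
    intro a
    have h1 : |a| ^ (2/((n:ℝ)-2)) * a * a = |a| ^ (2/((n:ℝ)-2)) * |a| * |a| := by
      rw [mul_assoc, mul_assoc, abs_mul_abs_self]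
    rw [h1]
    exact rpow_helper he ht (abs_nonneg a)
  -- D-norm identities from the weak equation
  have hDP : Dsq n (fun p => max (u p) 0) = bdryInt n (fun p => max (u p) 0) := by
    have keyP := hweak _ hup
    simp only [gradDot_up] at keyP
    unfold Dsq bdryInt
    rw [keyP]
    congr 1; funext x
    exact hscalP (u (x, 0))
  have hDM : Dsq n (fun p => max (-u p) 0) = bdryInt n (fun p => max (-u p) 0) := by
    have keyM := hweak _ hum
    simp only [gradDot_um] at keyM
    rw [integral_neg] at keyM
    have hrhs : (∫ x : EuclideanSpace ℝ (Fin (n-1)),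
        |u (x, 0)| ^ (2 / ((n : ℝ) - 2)) * u (x, 0) * max (-u (x, 0)) 0)
        = -(bdryInt n (fun p => max (-u p) 0)) := by
      unfold bdryInt
      rw [← integral_neg]
      congr 1; funext x
      exact hscalM (u (x, 0))
    rw [hrhs] at keyM
    have := neg_injective keyM
    exact this
  have hDU : Dsq n u = bdryInt n u := by
    have keyU := hweak _ hu
    unfold Dsq bdryInt gradSq
    rw [keyU]
    congr 1; funext x
    exact hscalU (u (x, 0))
  -- positivity of boundary integrals
  have hbP0 : 0 ≤ bdryInt n (fun p => max (u p) 0) :=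
    integral_nonneg fun x => Real.rpow_nonneg (abs_nonneg _) _
  have hbM0 : 0 ≤ bdryInt n (fun p => max (-u p) 0) :=
    integral_nonneg fun x => Real.rpow_nonneg (abs_nonneg _) _
  have hbPpos : 0 < bdryInt n (fun p => max (u p) 0) :=
    lt_of_le_of_ne hbP0 (by rw [← hDP]; exact fun h => hnep h.symm)
  have hbMpos : 0 < bdryInt n (fun p => max (-u p) 0) :=
    lt_of_le_of_ne hbM0 (by rw [← hDM]; exact fun h => hnem h.symm)
  -- key bound: S^{n-1} ≤ b for the pieces
  have keybound : ∀ b : ℝ, 0 < b → S * b ^ (2 / twoStar n) ≤ b → S ^ (n-1) ≤ b := by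
    intro b hb hle
    have h2t : 2 / twoStar n = ((n:ℝ)-2)/((n:ℝ)-1) := by
      unfold twoStar; field_simp
    have hbsplit : b = b ^ (((n:ℝ)-2)/((n:ℝ)-1)) * b ^ (1/((n:ℝ)-1)) := by
      rw [← Real.rpow_add hb,
        show ((n:ℝ)-2)/((n:ℝ)-1) + 1/((n:ℝ)-1) = 1 by field_simp; ring, Real.rpow_one]
    rw [h2t] at hle
    have hX : 0 < b ^ (((n:ℝ)-2)/((n:ℝ)-1)) := Real.rpow_pos_of_pos hb _
    have hSle : S ≤ b ^ (1/((n:ℝ)-1)) := by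
      have : S * b ^ (((n:ℝ)-2)/((n:ℝ)-1))
          ≤ b ^ (1/((n:ℝ)-1)) * b ^ (((n:ℝ)-2)/((n:ℝ)-1)) := by
        rw [mul_comm (b ^ (1/((n:ℝ)-1)))]
        calc S * b ^ (((n:ℝ)-2)/((n:ℝ)-1)) ≤ b := hle
          _ = _ := hbsplit
      exact le_of_mul_le_mul_right this hX
    calc S ^ (n-1) ≤ (b ^ (1/((n:ℝ)-1))) ^ (n-1) := pow_le_pow_left₀ hS.le hSle _
      _ = b := by
          rw [← Real.rpow_natCast (b ^ (1/((n:ℝ)-1))) (n-1), ← Real.rpow_mul hb.le,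
            show (1/((n:ℝ)-1)) * ((n-1 : ℕ) : ℝ) = 1 by
              rw [Nat.cast_sub (by omega : 1 ≤ n)]; push_cast; field_simp,
            Real.rpow_one]
  have hSbP : S ^ (n-1) ≤ bdryInt n (fun p => max (u p) 0) :=
    keybound _ hbPpos (le_of_le_of_eq (htrace _ hup) hDP)
  have hSbM : S ^ (n-1) ≤ bdryInt n (fun p => max (-u p) 0) :=
    keybound _ hbMpos (le_of_le_of_eq (htrace _ hum) hDM)
  -- energy formula
  have hcoef : 1/2 - 1/twoStar n = 1/(2*((n:ℝ)-1)) := by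
    unfold twoStar; field_simp; ring
  have hEform : ∀ v : EuclideanSpace ℝ (Fin (n-1)) × ℝ → ℝ, Dsq n v = bdryInt n v →
      energy n v = (1/(2*((n:ℝ)-1))) * bdryInt n v := by
    intro v hv
    unfold energy
    rw [hv, show (1/2) * bdryInt n v - (1/twoStar n) * bdryInt n v
      = (1/2 - 1/twoStar n) * bdryInt n v from by ring, hcoef]
  have hc : (0:ℝ) < 1/(2*((n:ℝ)-1)) := by positivity
  -- splitting of bdryInt u
  have hIntP : Integrable (fun x : EuclideanSpace ℝ (Fin (n-1)) =>
      |max (u (x,0)) 0| ^ twoStar n) := by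
    by_contra h
    exact (by rw [← hDP]; exact hnep : bdryInt n (fun p => max (u p) 0) ≠ 0)
      (integral_undef h)
  have hIntM : Integrable (fun x : EuclideanSpace ℝ (Fin (n-1)) =>
      |max (-u (x,0)) 0| ^ twoStar n) := by
    by_contra h
    exact (by rw [← hDM]; exact hnem : bdryInt n (fun p => max (-u p) 0) ≠ 0)
      (integral_undef h)
  have habs : ∀ a : ℝ, |a| ^ twoStar n = |max a 0| ^ twoStar n + |max (-a) 0| ^ twoStar n := by
    intro a
    rcases lt_trichotomy a 0 with h | h | h
    · rw [max_eq_right h.le, max_eq_left (by linarith : (0:ℝ) ≤ -a), abs_of_neg h,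
        abs_of_pos (by linarith : (0:ℝ) < -a)]
      simp [Real.zero_rpow ht0.ne']
    · subst h; simp [Real.zero_rpow ht0.ne']
    · rw [max_eq_left h.le, max_eq_right (by linarith : -a ≤ (0:ℝ)), abs_of_pos h]
      simp [Real.zero_rpow ht0.ne']
  have hsplit : bdryInt n u = bdryInt n (fun p => max (u p) 0)
      + bdryInt n (fun p => max (-u p) 0) := by
    unfold bdryInt
    rw [show (fun x : EuclideanSpace ℝ (Fin (n-1)) => |u (x,0)| ^ twoStar n)
      = fun x => |max (u (x,0)) 0| ^ twoStar n + |max (-u (x,0)) 0| ^ twoStar n from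
      funext fun x => habs (u (x,0))]
    exact integral_add hIntP hIntM
  refine ⟨?_, ?_, ?_⟩
  · rw [hEform _ hDP]
    exact mul_le_mul_of_nonneg_left hSbP hc.le
  · rw [hEform _ hDM]
    exact mul_le_mul_of_nonneg_left hSbM hc.le
  · rw [hEform _ hDU, hsplit]
    have h1 := mul_le_mul_of_nonneg_left hSbP hc.le
    have h2 := mul_le_mul_of_nonneg_left hSbM hc.le
    have hco : 1/((n:ℝ)-1) = 2 * (1/(2*((n:ℝ)-1))) := by field_simp
    rw [hco]
    nlinarith [h1, h2]
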